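/- In the Mallows model with dispersion φ ∈ (0,1), for any ground-truth linear order W and any profile P of linear orders, Pr(P|W) is proportional (with a constant independent of W) to the product over all ordered pairs (c,b) with c ≻_W b of φ^(−w_P(c,b)/2), where w_P(c,b) is the number of votes in P ranking c above b minus the number ranking b above c. -/

import Mathlib

open Finset

/-- `a` is preferred to `b` in the linear order `V` (positions: 0 = top). -/
def prefers {m : ℕ} (V : Equiv.Perm (Fin m)) (a b : Fin m) : Prop :=
  V.symm a < V.symm b

instance {m : ℕ} (V : Equiv.Perm (Fin m)) (a b : Fin m) : Decidable (prefers V a b) :=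
  inferInstanceAs (Decidable (_ < _))

/-- Kendall-tau distance between two linear orders. -/
def kendall {m : ℕ} (V W : Equiv.Perm (Fin m)) : ℕ :=
  (Finset.univ.filter (fun p : Fin m × Fin m =>
    p.1 < p.2 ∧ ¬ (prefers V p.1 p.2 ↔ prefers W p.1 p.2))).card

/-- Total Kendall-tau distance between a profile and a linear order. -/
def kendallP {m : ℕ} (P : Multiset (Equiv.Perm (Fin m))) (W : Equiv.Perm (Fin m)) : ℕ :=
  (P.map (fun V => kendall V W)).sum

/-- Weighted-majority-graph weight `w_P(a,b)`. -/
def wP {m : ℕ} (P : Multiset (Equiv.Perm (Fin m))) (a b : Fin m) : ℤ :=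
  ((P.filter (fun V => prefers V a b)).card : ℤ)
    - ((P.filter (fun V => prefers V b a)).card : ℤ)

/-- the Mallows likelihood of a profile is proportional (with constant
independent of the ground truth `W`) to `∏_{c ≻_W b} φ^(−w_P(c,b)/2)`. -/
lemma not_prefers {m : ℕ} (V : Equiv.Perm (Fin m)) {a b : Fin m} (h : a ≠ b) :
    ¬ prefers V a b ↔ prefers V b a := by
  have hne : V.symm b ≠ V.symm a := fun hh => h (V.symm.injective hh).symm
  unfold prefers
  constructor
  · intro hnl; exact lt_of_le_of_ne (not_lt.mp hnl) hne
  · exact fun h2 h1 => absurd h1 (asymm h2)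

lemma D_symm {m : ℕ} (V W : Equiv.Perm (Fin m)) (a b : Fin m) :
    (¬ (prefers V a b ↔ prefers W a b)) ↔ ¬ (prefers V b a ↔ prefers W b a) := by
  rcases eq_or_ne a b with rfl | h
  · simp [prefers]
  · rw [← not_prefers V h, ← not_prefers W h]
    tauto

lemma kendall_eq_sum {m : ℕ} (V W : Equiv.Perm (Fin m)) :
    kendall V W = ∑ p ∈ univ.filter (fun p : Fin m × Fin m => p.1 < p.2),
      (if ¬ (prefers V p.1 p.2 ↔ prefers W p.1 p.2) then 1 else 0) := by
  rw [kendall, ← Finset.filter_filter, Finset.card_filter]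

lemma sum_pairs_comp {m : ℕ} (f : Equiv.Perm (Fin m)) (g : Fin m × Fin m → ℕ)
    (hg : ∀ a b, g (a, b) = g (b, a)) :
    ∑ p ∈ univ.filter (fun p : Fin m × Fin m => p.1 < p.2), g (f p.1, f p.2)
      = ∑ p ∈ univ.filter (fun p : Fin m × Fin m => p.1 < p.2), g p := by
  classical
  set S := univ.filter (fun p : Fin m × Fin m => p.1 < p.2) with hSdef
  set S' := univ.filter (fun p : Fin m × Fin m => p.2 < p.1) with hS'def
  set O := univ.filter (fun p : Fin m × Fin m => p.1 ≠ p.2) with hOdef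
  have hS'S : ∀ h : Fin m × Fin m → ℕ, (∀ a b, h (a, b) = h (b, a)) →
      ∑ p ∈ S', h p = ∑ p ∈ S, h p := by
    intro h hh
    refine Finset.sum_nbij' (fun p => (p.2, p.1)) (fun p => (p.2, p.1)) ?_ ?_ ?_ ?_ ?_
    · intro p hp; simp only [hSdef, hS'def, mem_filter, mem_univ, true_and] at *; exact hp
    · intro p hp; simp only [hSdef, hS'def, mem_filter, mem_univ, true_and] at *; exact hp
    · intro p _; rfl
    · intro p _; rfl
    · intro p _; exact (hh p.2 p.1).symm
  have hO : ∀ h : Fin m × Fin m → ℕ, (∀ a b, h (a, b) = h (b, a)) →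
      ∑ p ∈ O, h p = ∑ p ∈ S, h p + ∑ p ∈ S, h p := by
    intro h hh
    have hunion : O = S ∪ S' := by
      ext p
      simp only [hOdef, hSdef, hS'def, mem_filter, mem_univ, true_and, mem_union,
        Fin.lt_def, Ne, Fin.ext_iff]
      omega
    have hd : Disjoint S S' := by
      rw [Finset.disjoint_left]
      intro p hp hp'
      simp only [hSdef, hS'def, mem_filter, mem_univ, true_and, Fin.lt_def] at hp hp'
      omega
    rw [hunion, Finset.sum_union hd, hS'S h hh]
  have key : ∑ p ∈ O, g (f p.1, f p.2) = ∑ p ∈ O, g p := by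
    refine Finset.sum_nbij' (fun p => (f p.1, f p.2)) (fun p => (f.symm p.1, f.symm p.2))
      ?_ ?_ ?_ ?_ ?_
    · intro p hp
      simp only [hOdef, mem_filter, mem_univ, true_and] at *
      exact fun hc => hp (f.injective hc)
    · intro p hp
      simp only [hOdef, mem_filter, mem_univ, true_and] at *
      exact fun hc => hp (f.symm.injective hc)
    · intro p _; simp
    · intro p _; simp
    · intro p _; rfl
  have h1 : ∑ p ∈ O, g (f p.1, f p.2) = ∑ p ∈ S, g (f p.1, f p.2) + ∑ p ∈ S, g (f p.1, f p.2) :=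
    hO _ (fun a b => hg (f a) (f b))
  have h2 := hO g hg
  omega

lemma kendall_comp {m : ℕ} (V W : Equiv.Perm (Fin m)) :
    kendall (V.trans W.symm) 1 = kendall V W := by
  rw [kendall_eq_sum, kendall_eq_sum]
  have h1 : ∀ p : Fin m × Fin m,
      (if ¬ (prefers (V.trans W.symm) p.1 p.2 ↔ prefers 1 p.1 p.2) then 1 else 0)
        = (fun q : Fin m × Fin m =>
            if ¬ (prefers V q.1 q.2 ↔ prefers W q.1 q.2) then 1 else 0) (W p.1, W p.2) := by
    intro p
    simp [prefers, Equiv.symm_trans_apply, Equiv.Perm.one_symm]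
    split_ifs <;> simp_all
  simp only [h1]
  exact sum_pairs_comp W
    (fun q => if ¬ (prefers V q.1 q.2 ↔ prefers W q.1 q.2) then 1 else 0)
    (fun a b => if_congr (D_symm V W a b) rfl rfl)

lemma Z_const {m : ℕ} (φ : ℝ) (W : Equiv.Perm (Fin m)) :
    ∑ V' : Equiv.Perm (Fin m), φ ^ kendall V' W
      = ∑ V' : Equiv.Perm (Fin m), φ ^ kendall V' 1 := by
  refine Fintype.sum_bijective (fun V : Equiv.Perm (Fin m) => V.trans W.symm) ?_ _ _ ?_
  · have : (fun V : Equiv.Perm (Fin m) => V.trans W.symm) = fun V => W.symm * V := rfl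
    rw [this]
    exact Group.mulLeft_bijective W.symm
  · intro V
    rw [kendall_comp]

lemma prod_map_pow {α : Type*} (P : Multiset α) (x : ℝ) (f : α → ℕ) :
    (P.map fun a => x ^ f a).prod = x ^ (P.map f).sum := by
  induction P using Multiset.induction with
  | empty => simp
  | cons a s ih => simp [ih, pow_add]

lemma sum_map_sum {α β : Type*} (P : Multiset α) (s : Finset β) (f : α → β → ℕ) :
    (P.map fun a => ∑ b ∈ s, f a b).sum = ∑ b ∈ s, (P.map fun a => f a b).sum := by
  induction P using Multiset.induction with
  | empty => simp
  | cons a t ih => simp [ih, Finset.sum_add_distrib]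

lemma sum_map_ite {α : Type*} (P : Multiset α) (p : α → Prop) [DecidablePred p] :
    (P.map fun a => if p a then 1 else 0).sum = (P.filter p).card := by
  induction P using Multiset.induction with
  | empty => simp
  | cons a t ih =>
    rw [Multiset.filter_cons]
    by_cases h : p a <;> simp [h, ih] <;> omega

lemma card_filter_split {m : ℕ} (P : Multiset (Equiv.Perm (Fin m))) {a b : Fin m}
    (h : a ≠ b) :
    (P.filter (fun V => prefers V a b)).card + (P.filter (fun V => prefers V b a)).card
      = Multiset.card P := by
  have : P.filter (fun V => prefers V b a) = P.filter (fun V => ¬ prefers V a b) :=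
    Multiset.filter_congr (fun V _ => (not_prefers V h).symm)
  rw [this, ← Multiset.card_add, Multiset.filter_add_not]

lemma pair_factor {m : ℕ} {φ : ℝ} (hφ0 : 0 < φ) (P : Multiset (Equiv.Perm (Fin m)))
    (W : Equiv.Perm (Fin m)) {a b : Fin m} (hab : a ≠ b) :
    φ ^ ((P.filter (fun V => ¬ (prefers V a b ↔ prefers W a b))).card)
      = φ ^ ((Multiset.card P : ℝ) / 2) *
        (if prefers W a b then φ ^ (-(wP P a b : ℝ) / 2)
          else φ ^ (-(wP P b a : ℝ) / 2)) := by
  set A := (P.filter (fun V => prefers V a b)).card with hA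
  set B := (P.filter (fun V => prefers V b a)).card with hB
  have hAB : A + B = Multiset.card P := card_filter_split P hab
  by_cases hW : prefers W a b
  · rw [if_pos hW]
    have hfil : P.filter (fun V => ¬ (prefers V a b ↔ prefers W a b))
        = P.filter (fun V => prefers V b a) := by
      refine Multiset.filter_congr (fun V _ => ?_)
      rw [iff_true_intro hW, iff_true, not_prefers V hab]
    rw [hfil, ← hB, ← Real.rpow_natCast φ B, ← Real.rpow_add hφ0]
    congr 1
    have h1 : (Multiset.card P : ℝ) = (A : ℝ) + B := by exact_mod_cast hAB.symm
    have h2 : (wP P a b : ℝ) = (A : ℝ) - B := by norm_num [wP, hA, hB]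
    rw [h1, h2]; ring
  · rw [if_neg hW]
    have hfil : P.filter (fun V => ¬ (prefers V a b ↔ prefers W a b))
        = P.filter (fun V => prefers V a b) := by
      refine Multiset.filter_congr (fun V _ => ?_)
      rw [iff_false_intro hW, iff_false, not_not]
    rw [hfil, ← hA, ← Real.rpow_natCast φ A, ← Real.rpow_add hφ0]
    congr 1
    have h1 : (Multiset.card P : ℝ) = (A : ℝ) + B := by exact_mod_cast hAB.symm
    have h2 : (wP P b a : ℝ) = (B : ℝ) - A := by norm_num [wP, hA, hB]
    rw [h1, h2]; ring
theorem mallows_likelihood_wmg {m : ℕ} (φ : ℝ) (hφ0 : 0 < φ) (hφ1 : φ < 1)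
    (P : Multiset (Equiv.Perm (Fin m))) :
    ∃ K : ℝ, 0 < K ∧ ∀ W : Equiv.Perm (Fin m),
      (P.map (fun V => φ ^ kendall V W /
          ∑ V' : Equiv.Perm (Fin m), φ ^ kendall V' W)).prod
        = K * ∏ p ∈ Finset.univ.filter (fun p : Fin m × Fin m => prefers W p.1 p.2),
            φ ^ (-(wP P p.1 p.2 : ℝ) / 2) := by
  classical
  set n := Multiset.card P with hn
  set S := univ.filter (fun p : Fin m × Fin m => p.1 < p.2) with hSdef
  set Z := ∑ V' : Equiv.Perm (Fin m), φ ^ kendall V' 1 with hZdef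
  have hZpos : 0 < Z := Finset.sum_pos (fun _ _ => pow_pos hφ0 _) ⟨1, mem_univ 1⟩
  refine ⟨(φ ^ ((n : ℝ) / 2)) ^ S.card / Z ^ n,
    div_pos (pow_pos (Real.rpow_pos_of_pos hφ0 _) _) (pow_pos hZpos _), ?_⟩
  intro W
  have hZW : ∑ V' : Equiv.Perm (Fin m), φ ^ kendall V' W = Z := Z_const φ W
  rw [hZW]
  have step1 : (P.map (fun V => φ ^ kendall V W / Z)).prod
      = (P.map fun V => φ ^ kendall V W).prod * (Z ^ n)⁻¹ := by
    simp only [div_eq_mul_inv]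
    rw [Multiset.prod_map_mul]
    congr 1
    rw [Multiset.map_const', Multiset.prod_replicate, inv_pow, hn]
  rw [step1, prod_map_pow]
  have hk : (P.map fun V => kendall V W).sum
      = ∑ p ∈ S, (P.filter (fun V => ¬ (prefers V p.1 p.2 ↔ prefers W p.1 p.2))).card := by
    have e1 : (P.map fun V => kendall V W)
        = P.map fun V => ∑ p ∈ S,
            (if ¬ (prefers V p.1 p.2 ↔ prefers W p.1 p.2) then 1 else 0) :=
      Multiset.map_congr rfl (fun V _ => kendall_eq_sum V W)
    rw [e1, sum_map_sum]
    exact Finset.sum_congr rfl (fun p _ => sum_map_ite P _)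
  rw [hk, ← Finset.prod_pow_eq_pow_sum]
  have hpair : ∀ p ∈ S,
      φ ^ ((P.filter (fun V => ¬ (prefers V p.1 p.2 ↔ prefers W p.1 p.2))).card)
        = φ ^ ((n : ℝ) / 2) *
          (if prefers W p.1 p.2 then φ ^ (-(wP P p.1 p.2 : ℝ) / 2)
            else φ ^ (-(wP P p.2 p.1 : ℝ) / 2)) := by
    intro p hp
    have hlt : p.1 < p.2 := by
      simpa [hSdef] using hp
    exact pair_factor hφ0 P W (ne_of_lt hlt)
  rw [Finset.prod_congr rfl hpair, Finset.prod_mul_distrib, Finset.prod_const]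
  have hre : (∏ p ∈ S, (if prefers W p.1 p.2 then φ ^ (-(wP P p.1 p.2 : ℝ) / 2)
        else φ ^ (-(wP P p.2 p.1 : ℝ) / 2)))
      = ∏ q ∈ univ.filter (fun p : Fin m × Fin m => prefers W p.1 p.2),
          φ ^ (-(wP P q.1 q.2 : ℝ) / 2) := by
    refine Finset.prod_nbij' (fun p => if prefers W p.1 p.2 then p else (p.2, p.1))
      (fun q => if q.1 < q.2 then q else (q.2, q.1)) ?_ ?_ ?_ ?_ ?_
    · intro p hp
      have hlt : p.1 < p.2 := by simpa [hSdef] using hp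
      by_cases h : prefers W p.1 p.2
      · simp [h]
      · simp only [if_neg h, mem_filter, mem_univ, true_and]
        exact (not_prefers W (ne_of_lt hlt)).mp h
    · intro q hq
      have hWq : prefers W q.1 q.2 := by simpa using hq
      have hne : q.1 ≠ q.2 := by
        intro h; rw [h] at hWq; exact lt_irrefl _ hWq
      by_cases h : q.1 < q.2
      · simp [hSdef, h]
      · have : q.2 < q.1 := lt_of_le_of_ne (not_lt.mp h) (Ne.symm hne)
        simp [hSdef, h, this]
    · intro p hp
      have hlt : p.1 < p.2 := by simpa [hSdef] using hp
      by_cases h : prefers W p.1 p.2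
      · simp [h, hlt]
      · simp [h, not_lt.mpr (le_of_lt hlt), lt_irrefl]
    · intro q hq
      have hWq : prefers W q.1 q.2 := by simpa using hq
      have hne : q.1 ≠ q.2 := by
        intro h; rw [h] at hWq; exact lt_irrefl _ hWq
      by_cases h : q.1 < q.2
      · simp [h, hWq]
      · have hnW : ¬ prefers W q.2 q.1 := fun hc => lt_asymm hc hWq
        simp [h, hnW]
    · intro p hp
      by_cases h : prefers W p.1 p.2 <;> simp [h]
  rw [hre, div_eq_mul_inv]
  ring
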